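/- (Ailon-Chazelle densification) Let x ∈ ℝ^d, H the d × d Walsh-Hadamard matrix, and B = diag(b) with b i.i.d. Rademacher. Then for any δ > 0, with probability at least 1 - δ over b, ‖d^{-1/2} H B x‖_∞ ≤ ‖x‖₂ · sqrt((2/d) · log(2d/δ)). -/

import Mathlib

open Matrix

/-- The Walsh-Hadamard matrix of size `2^k`, defined recursively:
`H_1 = [1]`, and `H_{2d} = [[H_d, H_d], [H_d, -H_d]]` (so `H_2 = [[1,1],[1,-1]]`). -/
noncomputable def walshHadamard : (k : ℕ) → Matrix (Fin (2 ^ k)) (Fin (2 ^ k)) ℝ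
  | 0 => fun _ _ => 1
  | (k + 1) =>
      Matrix.reindex
        (finSumFinEquiv.trans (finCongr (by omega)))
        (finSumFinEquiv.trans (finCongr (by omega)))
        (Matrix.fromBlocks (walshHadamard k) (walshHadamard k)
          (walshHadamard k) (-(walshHadamard k)))

open Finset

/-- (Ailon–Chazelle densification.) For `x ∈ ℝ^d`, `H` the `d × d` Walsh-Hadamard matrix
and `B = diag(b)` with i.i.d. Rademacher `b`: for any `δ > 0`, with probability at least
`1 - δ` over `b`, `‖d^{-1/2} H B x‖_∞ ≤ ‖x‖₂ √((2/d) log(2d/δ))`. -/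

lemma wh_sq (k : ℕ) (i t : Fin (2^k)) : (walshHadamard k i t)^2 = 1 := by
  induction k with
  | zero => simp [walshHadamard]
  | succ k ih =>
    rw [walshHadamard]
    simp only [Matrix.reindex_apply, Matrix.submatrix_apply]
    rcases h1 : (finSumFinEquiv.trans (finCongr (by omega : 2^k + 2^k = 2^(k+1)))).symm i with a | a <;>
    rcases h2 : (finSumFinEquiv.trans (finCongr (by omega : 2^k + 2^k = 2^(k+1)))).symm t with b | b <;>
    simp [Matrix.fromBlocks, ih]

lemma sum_exp_rad {n : ℕ} (a : Fin n → ℝ) :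
    ∑ ε : Fin n → Bool, Real.exp (∑ t, a t * (if ε t then (1:ℝ) else -1))
      = ∏ t, (Real.exp (a t) + Real.exp (-a t)) := by
  have h : ∀ t : Fin n, Real.exp (a t) + Real.exp (-a t)
      = ∑ b : Bool, Real.exp (a t * (if b then (1:ℝ) else -1)) := by
    intro t; simp [Fintype.sum_bool, mul_comm, add_comm]
  simp_rw [h]
  rw [Finset.prod_univ_sum, ← Fintype.piFinset_univ]
  simp_rw [Real.exp_sum]

lemma chernoff_count {n : ℕ} (a : Fin n → ℝ) (s : ℝ) (hs : 0 ≤ s)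
    (hσ : 0 < ∑ t, (a t)^2) :
    ((univ.filter (fun ε : Fin n → Bool =>
        s ≤ ∑ t, a t * (if ε t then (1:ℝ) else -1))).card : ℝ)
      ≤ 2^n * Real.exp (-(s^2 / (2 * ∑ t, (a t)^2))) := by
  set σ2 := ∑ t, (a t)^2 with hσ2
  set l := s / σ2 with hl
  have hl0 : 0 ≤ l := div_nonneg hs hσ.le
  have key : ((univ.filter (fun ε : Fin n → Bool =>
      s ≤ ∑ t, a t * (if ε t then (1:ℝ) else -1))).card : ℝ) * Real.exp (l * s)
      ≤ 2^n * Real.exp (l^2 * σ2 / 2) := by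
    calc ((univ.filter _).card : ℝ) * Real.exp (l * s)
        = ∑ ε ∈ univ.filter (fun ε : Fin n → Bool =>
            s ≤ ∑ t, a t * (if ε t then (1:ℝ) else -1)), Real.exp (l * s) := by
          rw [Finset.sum_const, nsmul_eq_mul]
      _ ≤ ∑ ε ∈ univ.filter (fun ε : Fin n → Bool =>
            s ≤ ∑ t, a t * (if ε t then (1:ℝ) else -1)),
            Real.exp (∑ t, (l * a t) * (if ε t then (1:ℝ) else -1)) := by
          apply Finset.sum_le_sum
          intro ε hε
          rw [Finset.mem_filter] at hε
          apply Real.exp_le_exp.2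
          have he : ∑ t, (l * a t) * (if ε t then (1:ℝ) else -1)
              = l * ∑ t, a t * (if ε t then (1:ℝ) else -1) := by
            rw [Finset.mul_sum]
            exact Finset.sum_congr rfl fun t _ => by ring
          rw [he]
          exact mul_le_mul_of_nonneg_left hε.2 hl0
      _ ≤ ∑ ε : Fin n → Bool,
            Real.exp (∑ t, (l * a t) * (if ε t then (1:ℝ) else -1)) := by
          apply Finset.sum_le_sum_of_subset_of_nonneg (Finset.filter_subset _ _)
          intros; positivity
      _ = ∏ t, (Real.exp (l * a t) + Real.exp (-(l * a t))) := sum_exp_rad _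
      _ ≤ ∏ t, (2 * Real.exp ((l * a t)^2 / 2)) := by
          apply Finset.prod_le_prod
          · intros; positivity
          · intro t _
            have := Real.cosh_le_exp_half_sq (l * a t)
            rw [Real.cosh_eq] at this
            linarith
      _ = 2^n * Real.exp (l^2 * σ2 / 2) := by
          rw [Finset.prod_mul_distrib, Finset.prod_const, ← Real.exp_sum,
            Finset.card_univ, Fintype.card_fin]
          congr 1
          simp_rw [mul_pow]
          rw [← Finset.sum_div, ← Finset.mul_sum, ← hσ2]
  have hexp : Real.exp (l^2 * σ2 / 2) / Real.exp (l * s)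
      = Real.exp (-(s^2 / (2 * σ2))) := by
    rw [← Real.exp_sub]
    congr 1
    field_simp [hl]
    rw [hl]; field_simp; ring
  have h2 : (0:ℝ) < Real.exp (l * s) := Real.exp_pos _
  have h3 := (le_div_iff₀ h2).2 key
  rwa [mul_div_assoc, hexp] at h3

lemma gen_densification (n : ℕ) (hn1 : 1 ≤ n) (H : Matrix (Fin n) (Fin n) ℝ)
    (hH : ∀ i t, (H i t)^2 = 1) (x : Fin n → ℝ) (c : ℝ) (hc2 : c^2 = 1/(n:ℝ))
    (δ : ℝ) (hδ : 0 < δ) :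
    (1 : ℝ) - δ ≤
      ((Finset.univ.filter (fun ε : Fin n → Bool =>
          ∀ i, |c * ∑ t, H i t * (if ε t then (1 : ℝ) else -1) * x t| ≤
            Real.sqrt (∑ t, (x t) ^ 2) *
              Real.sqrt ((2 / (n:ℝ)) * Real.log (2 * (n:ℝ) / δ)))).card : ℝ) / 2 ^ n := by
  have hD : (0:ℝ) < (n : ℝ) := by exact_mod_cast hn1
  have hD1 : (1:ℝ) ≤ (n : ℝ) := by exact_mod_cast hn1
  set s : ℝ := Real.sqrt (∑ t, (x t)^2) * Real.sqrt ((2/(n:ℝ)) * Real.log (2*(n:ℝ)/δ)) with hs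
  have hs0 : 0 ≤ s := mul_nonneg (Real.sqrt_nonneg _) (Real.sqrt_nonneg _)
  have hpow : (0:ℝ) < 2^n := by positivity
  rw [le_div_iff₀ hpow]
  by_cases hδ1 : 1 ≤ δ
  · have h0 : ((1:ℝ) - δ) * 2^n ≤ 0 := mul_nonpos_of_nonpos_of_nonneg (by linarith) (by positivity)
    exact h0.trans (by positivity)
  push_neg at hδ1
  set a : Fin n → Fin n → ℝ := fun i t => c * H i t * x t with ha
  have hrw : ∀ (i : Fin n) (ε : Fin n → Bool),
      c * ∑ t, H i t * (if ε t then (1:ℝ) else -1) * x t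
        = ∑ t, a i t * (if ε t then (1:ℝ) else -1) := by
    intro i ε
    rw [Finset.mul_sum]
    exact Finset.sum_congr rfl fun t _ => by simp only [ha]; ring
  have hσ : ∀ i : Fin n, ∑ t, (a i t)^2 = (∑ t, (x t)^2) / (n:ℝ) := by
    intro i
    rw [Finset.sum_div]
    refine Finset.sum_congr rfl fun t _ => ?_
    simp only [ha]
    rw [mul_pow, mul_pow, hc2, hH i t]
    ring
  by_cases hx : ∑ t, (x t)^2 = 0
  · have hx0 : ∀ t, x t = 0 := by
      intro t
      have h1 := (Finset.sum_eq_zero_iff_of_nonneg (fun t _ => sq_nonneg (x t))).1 hx t (mem_univ t)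
      exact pow_eq_zero_iff (two_ne_zero) |>.1 h1
    have hall : (Finset.univ.filter (fun ε : Fin n → Bool =>
        ∀ i, |c * ∑ t, H i t * (if ε t then (1 : ℝ) else -1) * x t| ≤ s)) = univ := by
      apply Finset.filter_true_of_mem
      intro ε _ i
      have h1 : ∑ t, H i t * (if ε t then (1:ℝ) else -1) * x t = 0 :=
        Finset.sum_eq_zero fun t _ => by rw [hx0 t, mul_zero]
      rw [h1, mul_zero, abs_zero]
      exact hs0
    rw [hall, Finset.card_univ, Fintype.card_fun, Fintype.card_bool, Fintype.card_fin]
    push_cast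
    nlinarith [hpow]
  have hxpos : 0 < ∑ t, (x t)^2 :=
    lt_of_le_of_ne (Finset.sum_nonneg fun t _ => sq_nonneg _) (Ne.symm hx)
  have hσpos : ∀ i : Fin n, 0 < ∑ t, (a i t)^2 := fun i => by
    rw [hσ i]; positivity
  have hlogpos : 0 ≤ Real.log (2*(n:ℝ)/δ) := by
    apply Real.log_nonneg
    rw [le_div_iff₀ hδ]
    nlinarith [hD1, hδ1]
  have hs2 : s^2 = (∑ t, (x t)^2) * ((2/(n:ℝ)) * Real.log (2*(n:ℝ)/δ)) := by
    rw [hs, mul_pow, Real.sq_sqrt hxpos.le, Real.sq_sqrt (by positivity)]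
  have hexp : ∀ i : Fin n, Real.exp (-(s^2 / (2 * ∑ t, (a i t)^2))) = δ / (2*(n:ℝ)) := by
    intro i
    have harg : s^2 / (2 * ∑ t, (a i t)^2) = Real.log (2*(n:ℝ)/δ) := by
      rw [hσ i, hs2]
      field_simp
    rw [harg, Real.exp_neg, Real.exp_log (by positivity), inv_div]
  have tail1 : ∀ i : Fin n,
      ((univ.filter (fun ε : Fin n → Bool =>
        s ≤ ∑ t, a i t * (if ε t then (1:ℝ) else -1))).card : ℝ) ≤ 2^n * (δ / (2*(n:ℝ))) := by
    intro i
    have h1 := chernoff_count (a i) s hs0 (hσpos i)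
    rwa [hexp i] at h1
  have tail2 : ∀ i : Fin n,
      ((univ.filter (fun ε : Fin n → Bool =>
        s ≤ -(∑ t, a i t * (if ε t then (1:ℝ) else -1)))).card : ℝ) ≤ 2^n * (δ / (2*(n:ℝ))) := by
    intro i
    have hneg : ∑ t, (fun t => -(a i t)) t ^ 2 = ∑ t, (a i t)^2 :=
      Finset.sum_congr rfl fun t _ => by ring
    have h := chernoff_count (fun t => -(a i t)) s hs0 (by rw [hneg]; exact hσpos i)
    have hpred : (univ.filter (fun ε : Fin n → Bool =>
        s ≤ -(∑ t, a i t * (if ε t then (1:ℝ) else -1))))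
        = (univ.filter (fun ε : Fin n → Bool =>
        s ≤ ∑ t, (fun t => -(a i t)) t * (if ε t then (1:ℝ) else -1))) := by
      apply Finset.filter_congr
      intro ε _
      rw [← Finset.sum_neg_distrib]
      simp_rw [neg_mul]
    rw [hpred]
    calc ((univ.filter _).card : ℝ)
        ≤ 2^n * Real.exp (-(s^2 / (2 * ∑ t, ((fun t => -(a i t)) t)^2))) := h
      _ = 2^n * (δ/(2*(n:ℝ))) := by rw [show ∑ t, ((fun t => -(a i t)) t)^2 = ∑ t, (a i t)^2 from hneg, hexp i]
  set bad := univ.filter (fun ε : Fin n → Bool =>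
      ¬ ∀ i, |c * ∑ t, H i t * (if ε t then (1 : ℝ) else -1) * x t| ≤ s) with hbad
  have hsub : bad ⊆ univ.biUnion (fun i : Fin n =>
      (univ.filter (fun ε : Fin n → Bool => s ≤ ∑ t, a i t * (if ε t then (1:ℝ) else -1)))
      ∪ (univ.filter (fun ε : Fin n → Bool => s ≤ -(∑ t, a i t * (if ε t then (1:ℝ) else -1))))) := by
    intro ε hε
    rw [hbad, Finset.mem_filter] at hε
    have hε2 := hε.2
    push_neg at hε2
    obtain ⟨i, hi⟩ := hε2
    rw [hrw i ε] at hi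
    rw [Finset.mem_biUnion]
    refine ⟨i, mem_univ i, ?_⟩
    rw [Finset.mem_union, Finset.mem_filter, Finset.mem_filter]
    rcases abs_cases (∑ t, a i t * (if ε t then (1:ℝ) else -1)) with ⟨h, _⟩ | ⟨h, _⟩
    · left; exact ⟨mem_univ _, by rw [← h]; exact hi.le⟩
    · right; exact ⟨mem_univ _, by rw [← h]; exact hi.le⟩
  have hbadcard : (bad.card : ℝ) ≤ 2^n * δ := by
    have h1 : bad.card ≤ ∑ i : Fin n,
        ((univ.filter (fun ε : Fin n → Bool => s ≤ ∑ t, a i t * (if ε t then (1:ℝ) else -1)))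
        ∪ (univ.filter (fun ε : Fin n → Bool => s ≤ -(∑ t, a i t * (if ε t then (1:ℝ) else -1))))).card :=
      (Finset.card_le_card hsub).trans (Finset.card_biUnion_le)
    have h2 : (bad.card : ℝ) ≤ ∑ i : Fin n, (2^n * (δ/(2*(n:ℝ))) + 2^n * (δ/(2*(n:ℝ)))) := by
      calc (bad.card : ℝ) ≤ ∑ i : Fin n,
          (((univ.filter (fun ε : Fin n → Bool => s ≤ ∑ t, a i t * (if ε t then (1:ℝ) else -1)))
          ∪ (univ.filter (fun ε : Fin n → Bool => s ≤ -(∑ t, a i t * (if ε t then (1:ℝ) else -1))))).card : ℝ) := by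
            exact_mod_cast h1
        _ ≤ _ := by
            apply Finset.sum_le_sum
            intro i _
            calc ((_ ∪ _ : Finset _).card : ℝ)
                ≤ (((univ.filter (fun ε : Fin n → Bool => s ≤ ∑ t, a i t * (if ε t then (1:ℝ) else -1))).card : ℝ)
                  + ((univ.filter (fun ε : Fin n → Bool => s ≤ -(∑ t, a i t * (if ε t then (1:ℝ) else -1)))).card : ℝ)) := by
                  exact_mod_cast Finset.card_union_le _ _
              _ ≤ _ := add_le_add (tail1 i) (tail2 i)
    rw [Finset.sum_const, Finset.card_univ, Fintype.card_fin, nsmul_eq_mul] at h2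
    calc (bad.card : ℝ) ≤ (n:ℝ) * (2^n * (δ/(2*(n:ℝ))) + 2^n * (δ/(2*(n:ℝ)))) := h2
      _ = 2^n * δ := by field_simp; ring
  have hsplit : (univ.filter (fun ε : Fin n → Bool =>
      ∀ i, |c * ∑ t, H i t * (if ε t then (1 : ℝ) else -1) * x t| ≤ s)).card + bad.card = 2^n := by
    rw [hbad, Finset.card_filter_add_card_filter_not,
      Finset.card_univ, Fintype.card_fun, Fintype.card_bool, Fintype.card_fin]
  have hgood : ((univ.filter (fun ε : Fin n → Bool =>
      ∀ i, |c * ∑ t, H i t * (if ε t then (1 : ℝ) else -1) * x t| ≤ s)).card : ℝ)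
      = 2^n - bad.card := by
    have h1 := congrArg (Nat.cast (R := ℝ)) hsplit
    push_cast at h1
    linarith
  rw [hgood]
  nlinarith [hpow]

theorem ailon_chazelle_densification (k : ℕ) (x : Fin (2 ^ k) → ℝ)
    (d : ℕ) (hd : d = 2 ^ k) (δ : ℝ) (hδ : 0 < δ) :
    (1 : ℝ) - δ ≤
      ((Finset.univ.filter (fun ε : Fin (2 ^ k) → Bool =>
          ∀ i, |(d : ℝ) ^ (-(1 : ℝ) / 2) *
              ∑ t, walshHadamard k i t * (if ε t then (1 : ℝ) else -1) * x t| ≤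
            Real.sqrt (∑ t, (x t) ^ 2) *
              Real.sqrt ((2 / d) * Real.log (2 * d / δ)))).card : ℝ) / 2 ^ d := by
  subst hd
  have hD : (0:ℝ) < ((2^k : ℕ) : ℝ) := by positivity
  have hc2 : (((2^k : ℕ) : ℝ) ^ (-(1:ℝ)/2))^2 = 1/((2^k : ℕ):ℝ) := by
    rw [← Real.rpow_natCast ((((2^k:ℕ)):ℝ) ^ (-(1:ℝ)/2)) 2, ← Real.rpow_mul hD.le]
    norm_num [Real.rpow_neg_one]
  exact gen_densification (2^k) Nat.one_le_two_pow (walshHadamard k) (wh_sq k) x _ hc2 δ hδ
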